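/- Let E₀₀ := !![1,0;0,0], E₁₁ := !![0,0;0,1], and M₋ := (1/2)·!![1,−1;−1,1] (the projector onto (|0⟩−|1⟩)/√2) be 2×2 complex matrices. Set s := sin²(π/8), β := 1/√(8s² + 5), and α := 2βs. Then 2α² + 5β² = 1, and the 4×4 matrix P := α·√(1/2)·(I₂ ⊗ E₀₀) + β·√(1/2)·((E₁₁ + M₋) ⊗ E₁₁) is Hermitian positive definite with smallest eigenvalue λ_min(P) = (2−√2)/(4·√(4−√2)). -/

import Mathlib

open Matrix Kronecker ComplexOrder

/-- The smallest eigenvalue of a Hermitian matrix (junk value `0` otherwise). -/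
noncomputable def lamMin {n : Type*} [Fintype n] [DecidableEq n]
    (A : Matrix n n ℂ) : ℝ :=
  if hA : A.IsHermitian then ⨅ i, hA.eigenvalues i else 0

lemma psd_vecMulVec {n : Type*} [Fintype n] (u : n → ℂ) :
    (Matrix.vecMulVec u (star u)).PosSemidef := by
  rw [Matrix.posSemidef_iff_dotProduct_mulVec]
  constructor
  · ext i j
    simp [Matrix.conjTranspose_apply, Matrix.vecMulVec_apply, mul_comm]
  · intro x
    have h : dotProduct (star x) (Matrix.vecMulVec u (star u) *ᵥ x)
        = star (dotProduct (star u) x) * (dotProduct (star u) x) := by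
      simp only [dotProduct, Matrix.mulVec, Matrix.vecMulVec_apply, Pi.star_apply]
      rw [star_sum, Finset.sum_mul_sum]
      apply Finset.sum_congr rfl
      intro i _
      rw [Finset.mul_sum]
      apply Finset.sum_congr rfl
      intro j _
      simp only [star_mul', star_star]
      ring
    rw [h]
    exact star_mul_self_nonneg _

lemma det_sub_smul_eq_prod {n : Type*} [Fintype n] [DecidableEq n]
    {A : Matrix n n ℂ} (hA : A.IsHermitian) (m : ℝ) :
    (A - (m : ℂ) • 1).det = ∏ i, ((hA.eigenvalues i : ℂ) - (m : ℂ)) := by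
  have hU : (hA.eigenvectorUnitary : Matrix n n ℂ) *
      star (hA.eigenvectorUnitary : Matrix n n ℂ) = 1 :=
    (Matrix.mem_unitaryGroup_iff).mp hA.eigenvectorUnitary.2
  have key : A - (m : ℂ) • 1 =
      (hA.eigenvectorUnitary : Matrix n n ℂ) *
        Matrix.diagonal (fun i => (hA.eigenvalues i : ℂ) - (m : ℂ)) *
        star (hA.eigenvectorUnitary : Matrix n n ℂ) := by
    have hD : Matrix.diagonal (fun i => (hA.eigenvalues i : ℂ) - (m : ℂ))
        = Matrix.diagonal (RCLike.ofReal ∘ hA.eigenvalues) - (m : ℂ) • 1 := by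
      ext i j
      by_cases h : i = j <;>
        simp [h, Matrix.diagonal_apply, Matrix.one_apply, Matrix.smul_apply]
    have hsp := hA.spectral_theorem
    rw [Unitary.conjStarAlgAut_apply] at hsp
    rw [hD, Matrix.mul_sub, Matrix.sub_mul, Matrix.mul_smul, Matrix.smul_mul, Matrix.mul_one, hU,
      ← hsp]
  rw [key, Matrix.det_mul_right_comm, hU, Matrix.one_mul, Matrix.det_diagonal]

lemma eq_of_sq_eq {x y : ℝ} (hx : 0 ≤ x) (hy : 0 ≤ y) (h : x ^ 2 = y ^ 2) : x = y := by
  rw [← Real.sqrt_sq hx, ← Real.sqrt_sq hy, h]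

set_option maxHeartbeats 1000000 in
lemma decomp (ac bc a b2 : ℝ)
    (e1 : bc * (1 / 2) = ac + a * a)
    (e2 : bc * (3 / 2) = ac + b2 * b2)
    (hab : a * b2 = bc / 2) :
    ((ac : ℝ) : ℂ) • ((1 : Matrix (Fin 2) (Fin 2) ℂ) ⊗ₖ !![1, 0; 0, 0]) +
      ((bc : ℝ) : ℂ) • ((!![0, 0; 0, 1] + (1 / 2 : ℂ) • !![1, -1; -1, 1]) ⊗ₖ !![0, 0; 0, 1]) =
    ((ac : ℝ) : ℂ) • 1 +
      Matrix.vecMulVec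
        (fun p : Fin 2 × Fin 2 =>
          if p.2 = 1 then (if p.1 = 0 then -(a : ℂ) else (b2 : ℂ)) else 0)
        (star fun p : Fin 2 × Fin 2 =>
          if p.2 = 1 then (if p.1 = 0 then -(a : ℂ) else (b2 : ℂ)) else 0) := by
  have E1 : ((bc * (1 / 2) : ℝ) : ℂ) = ((ac + a * a : ℝ) : ℂ) := by rw [e1]
  have E2 : ((bc * (3 / 2) : ℝ) : ℂ) = ((ac + b2 * b2 : ℝ) : ℂ) := by rw [e2]
  have E3 : ((a * b2 : ℝ) : ℂ) = ((bc / 2 : ℝ) : ℂ) := by rw [hab]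
  push_cast at E1 E2 E3
  ext ⟨i, j⟩ ⟨k, l⟩
  fin_cases i <;> fin_cases j <;> fin_cases k <;> fin_cases l <;>
    simp [Matrix.kroneckerMap_apply, Matrix.vecMulVec_apply, Matrix.one_apply,
      Matrix.smul_apply, Matrix.add_apply, Prod.ext_iff] <;>
    push_cast <;>
    first
      | ring1
      | linear_combination E1
      | linear_combination E2
      | linear_combination E3
      | linear_combination -E3

set_option maxHeartbeats 1600000 in
theorem harrow_example_lamMin
    (E00 E11 Mm : Matrix (Fin 2) (Fin 2) ℂ)
    (hE00 : E00 = !![1, 0; 0, 0])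
    (hE11 : E11 = !![0, 0; 0, 1])
    (hMm : Mm = (1 / 2 : ℂ) • !![1, -1; -1, 1])
    (s β α : ℝ)
    (hs : s = Real.sin (Real.pi / 8) ^ 2)
    (hβ : β = 1 / Real.sqrt (8 * s ^ 2 + 5))
    (hα : α = 2 * β * s)
    (P : Matrix (Fin 2 × Fin 2) (Fin 2 × Fin 2) ℂ)
    (hP : P = ((α * Real.sqrt (1 / 2) : ℝ) : ℂ) • ((1 : Matrix (Fin 2) (Fin 2) ℂ) ⊗ₖ E00) +
              ((β * Real.sqrt (1 / 2) : ℝ) : ℂ) • ((E11 + Mm) ⊗ₖ E11)) :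
    2 * α ^ 2 + 5 * β ^ 2 = 1 ∧
    P.PosDef ∧
    lamMin P = (2 - Real.sqrt 2) / (4 * Real.sqrt (4 - Real.sqrt 2)) := by
  have hr : Real.sqrt 2 ^ 2 = 2 := Real.sq_sqrt (by norm_num)
  have hrpos : 0 < Real.sqrt 2 := Real.sqrt_pos.mpr (by norm_num)
  have hr1 : 1 < Real.sqrt 2 := by nlinarith
  have hr2 : Real.sqrt 2 < 2 := by nlinarith
  have hsv : s = (2 - Real.sqrt 2) / 4 := by
    rw [hs, Real.sin_pi_div_eight, div_pow,
      Real.sq_sqrt (by nlinarith : (0:ℝ) ≤ 2 - Real.sqrt 2)]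
    norm_num
  have h85 : 8 * s ^ 2 + 5 = 8 - 2 * Real.sqrt 2 := by rw [hsv]; nlinarith
  have h85pos : (0:ℝ) < 8 - 2 * Real.sqrt 2 := by nlinarith
  have hq : Real.sqrt (8 * s ^ 2 + 5) ^ 2 = 8 - 2 * Real.sqrt 2 := by
    rw [h85]; exact Real.sq_sqrt (le_of_lt h85pos)
  have hqpos : 0 < Real.sqrt (8 * s ^ 2 + 5) := Real.sqrt_pos.mpr (by rw [h85]; exact h85pos)
  have hβpos : 0 < β := by rw [hβ]; positivity
  have hβ2 : β ^ 2 * (8 - 2 * Real.sqrt 2) = 1 := by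
    rw [hβ, div_pow, one_pow, ← hq]
    field_simp
  have part1 : 2 * α ^ 2 + 5 * β ^ 2 = 1 := by
    rw [hα, hsv]
    linear_combination hβ2 + β ^ 2 / 2 * hr
  set c := Real.sqrt (1 / 2) with hcdef
  have hcpos : 0 < c := Real.sqrt_pos.mpr (by norm_num)
  have hc : c ^ 2 = 1 / 2 := Real.sq_sqrt (by norm_num)
  have hαv : α = β * (2 - Real.sqrt 2) / 2 := by rw [hα, hsv]; ring
  have hαpos : 0 < α := by rw [hαv]; nlinarith
  have hmpos : 0 < α * c := mul_pos hαpos hcpos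
  have h4r : (0:ℝ) < 4 - Real.sqrt 2 := by nlinarith
  have hsq4 : Real.sqrt (4 - Real.sqrt 2) ^ 2 = 4 - Real.sqrt 2 := Real.sq_sqrt (le_of_lt h4r)
  have hsq4pos : 0 < Real.sqrt (4 - Real.sqrt 2) := Real.sqrt_pos.mpr h4r
  have hkey : β * c * Real.sqrt (4 - Real.sqrt 2) = 1 / 2 := by
    apply eq_of_sq_eq (by positivity) (by norm_num)
    rw [mul_pow, mul_pow, hsq4, hc]
    linear_combination (1/4 : ℝ) * hβ2
  have hmt : α * c = (2 - Real.sqrt 2) / (4 * Real.sqrt (4 - Real.sqrt 2)) := by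
    rw [eq_div_iff (by positivity : (4 : ℝ) * Real.sqrt (4 - Real.sqrt 2) ≠ 0), hαv]
    linear_combination (2 * (2 - Real.sqrt 2)) * hkey
  have ha0 : (0:ℝ) ≤ β * c * (Real.sqrt 2 - 1) / 2 := by nlinarith [mul_pos hβpos hcpos]
  have hb0 : (0:ℝ) ≤ β * c * (Real.sqrt 2 + 1) / 2 := by positivity
  set a := Real.sqrt (β * c * (Real.sqrt 2 - 1) / 2) with hadef
  set b2 := Real.sqrt (β * c * (Real.sqrt 2 + 1) / 2) with hb2def
  have ha2 : a ^ 2 = β * c * (Real.sqrt 2 - 1) / 2 := Real.sq_sqrt ha0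
  have hbb2 : b2 ^ 2 = β * c * (Real.sqrt 2 + 1) / 2 := Real.sq_sqrt hb0
  have hanneg : 0 ≤ a := Real.sqrt_nonneg _
  have hbneg : 0 ≤ b2 := Real.sqrt_nonneg _
  have hab : a * b2 = β * c / 2 := by
    apply eq_of_sq_eq (by positivity) (by positivity)
    rw [mul_pow, ha2, hbb2]
    linear_combination (β * c) ^ 2 / 4 * hr
  have e1 : β * c * (1 / 2) = α * c + a * a := by
    rw [hαv]; linear_combination -ha2
  have e2 : β * c * (3 / 2) = α * c + b2 * b2 := by
    rw [hαv]; linear_combination -hbb2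
  set u : Fin 2 × Fin 2 → ℂ := fun p =>
    if p.2 = 1 then (if p.1 = 0 then -(a : ℂ) else (b2 : ℂ)) else 0 with hu
  have hPdec : P = ((α * c : ℝ) : ℂ) • 1 + Matrix.vecMulVec u (star u) := by
    rw [hP, hE00, hE11, hMm]
    exact decomp (α * c) (β * c) a b2 e1 e2 hab
  -- positive definiteness
  have hpd1 : (((α * c : ℝ) : ℂ) • (1 : Matrix (Fin 2 × Fin 2) (Fin 2 × Fin 2) ℂ)).PosDef := by
    have hdiag : ((α * c : ℝ) : ℂ) • (1 : Matrix (Fin 2 × Fin 2) (Fin 2 × Fin 2) ℂ)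
        = Matrix.diagonal (fun _ => ((α * c : ℝ) : ℂ)) := by
      ext i j
      by_cases h : i = j <;> simp [h, Matrix.one_apply, Matrix.diagonal_apply]
    rw [hdiag]
    exact Matrix.posDef_diagonal_iff.mpr fun _ => by exact_mod_cast hmpos
  have hpos : P.PosDef := by
    rw [hPdec]
    exact hpd1.add_posSemidef (psd_vecMulVec u)
  have hHerm : P.IsHermitian := hpos.isHermitian
  refine ⟨part1, hpos, ?_⟩
  -- lower bound for eigenvalues
  have hlow : ∀ i, α * c ≤ hHerm.eigenvalues i := by
    intro i
    have hv := hHerm.mulVec_eigenvectorBasis i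
    set v : Fin 2 × Fin 2 → ℂ := ⇑(hHerm.eigenvectorBasis i) with hvdef
    have hnorm : dotProduct (star v) v = 1 := by
      have h1 : ‖hHerm.eigenvectorBasis i‖ = 1 := hHerm.eigenvectorBasis.orthonormal.1 i
      have h2 := EuclideanSpace.inner_eq_star_dotProduct
        (𝕜 := ℂ) (hHerm.eigenvectorBasis i) (hHerm.eigenvectorBasis i)
      rw [inner_self_eq_norm_sq_to_K, h1] at h2
      have h3 := h2.symm
      simp at h3
      rw [dotProduct_comm]
      exact h3
    have hpsd := (psd_vecMulVec u).dotProduct_mulVec_nonneg v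
    have hNv : Matrix.vecMulVec u (star u) *ᵥ v = P *ᵥ v - ((α * c : ℝ) : ℂ) • v := by
      rw [hPdec, Matrix.add_mulVec, Matrix.smul_mulVec, Matrix.one_mulVec]
      abel
    rw [hNv, hv] at hpsd
    have hcalc : dotProduct (star v) ((hHerm.eigenvalues i) • v - ((α * c : ℝ) : ℂ) • v)
        = ((hHerm.eigenvalues i - α * c : ℝ) : ℂ) := by
      rw [dotProduct_sub]
      rw [RCLike.real_smul_eq_coe_smul (K := ℂ)]
      rw [dotProduct_smul, dotProduct_smul, hnorm]
      simp only [smul_eq_mul, mul_one]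
      have hco : ∀ y : ℝ, (RCLike.ofReal y : ℂ) = Complex.ofReal y := fun _ => rfl
      simp only [hco]
      push_cast
      ring
    rw [hcalc] at hpsd
    have : (0:ℝ) ≤ hHerm.eigenvalues i - α * c := by exact_mod_cast hpsd
    linarith
  -- m is an eigenvalue
  have hdet : (P - ((α * c : ℝ) : ℂ) • 1).det = 0 := by
    have hPN : P - ((α * c : ℝ) : ℂ) • 1 = Matrix.vecMulVec u (star u) := by
      rw [hPdec]; abel
    rw [hPN]
    apply Matrix.det_eq_zero_of_row_eq_zero ((0 : Fin 2), (0 : Fin 2))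
    intro j
    simp [Matrix.vecMulVec_apply, hu]
  have hex : ∃ i, hHerm.eigenvalues i = α * c := by
    rw [det_sub_smul_eq_prod hHerm] at hdet
    obtain ⟨i, -, hi⟩ := Finset.prod_eq_zero_iff.mp hdet
    exact ⟨i, by exact_mod_cast sub_eq_zero.mp hi⟩
  obtain ⟨i0, hi0⟩ := hex
  rw [lamMin, dif_pos hHerm, ← hmt]
  apply le_antisymm
  · exact hi0 ▸ ciInf_le (Set.Finite.bddBelow (Set.finite_range _)) i0
  · exact le_ciInf hlow
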